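/- For the two-phase test, the type-I error probability satisfies limsup_{n→∞} (1/n) log P₁(A₂^τ) ≤ −min{ D(P^(λ₁)‖P₁), γ + k·D(P^(λ)‖P₁) }. -/
import Mathlib


open Real Filter Finset MeasureTheory
open scoped Classical
set_option linter.unusedSectionVars false
set_option linter.unusedVariables false
set_option linter.unnecessarySimpa false

variable {𝒳 : Type*} [Fintype 𝒳] [DecidableEq 𝒳] [Nonempty 𝒳]

/-- Kullback–Leibler divergence `D(Q‖P)` between pmfs on a finite alphabet. -/
noncomputable def kl (Q P : 𝒳 → ℝ) : ℝ :=
  ∑ x, Q x * Real.log (Q x / P x)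

/-- The `λ`-tilted distribution `P^(λ)` of `P₁` and `P₂`. -/
noncomputable def tilt (P₁ P₂ : 𝒳 → ℝ) (l : ℝ) : 𝒳 → ℝ :=
  fun x => P₁ x ^ (1 - l) * P₂ x ^ l / ∑ a, P₁ a ^ (1 - l) * P₂ a ^ l

/-- Probability of a set of length-`N` sample paths under i.i.d. sampling from `P`. -/
noncomputable def prodProb (P : 𝒳 → ℝ) {N : ℕ} (S : Set (Fin N → 𝒳)) : ℝ :=
  ∑ ω : Fin N → 𝒳, S.indicator (fun ω' => ∏ i, P (ω' i)) ω

/-- The fixed-length error-exponent region `R_FD`. -/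
def RFD (P₁ P₂ : 𝒳 → ℝ) : Set (ℝ × ℝ) :=
  {p | 0 ≤ p.1 ∧ 0 ≤ p.2 ∧
    ∃ l ∈ Set.Icc (0:ℝ) 1,
      p.1 ≤ kl (tilt P₁ P₂ l) P₁ ∧ p.2 ≤ kl (tilt P₁ P₂ l) P₂}

/-- `E₁(γ) = max{D(P^(λ)‖P₁) : λ ∈ [0,1], D(P^(λ)‖P₂) ≥ γ}` (sup of the empty set is 0). -/
noncomputable def E1exp (P₁ P₂ : 𝒳 → ℝ) (γ : ℝ) : ℝ :=
  sSup {E | ∃ l ∈ Set.Icc (0:ℝ) 1, γ ≤ kl (tilt P₁ P₂ l) P₂ ∧ E = kl (tilt P₁ P₂ l) P₁}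

/-- `E₂(γ) = max{D(P^(λ)‖P₂) : λ ∈ [0,1], D(P^(λ)‖P₁) ≥ γ}` (sup of the empty set is 0). -/
noncomputable def E2exp (P₁ P₂ : 𝒳 → ℝ) (γ : ℝ) : ℝ :=
  sSup {E | ∃ l ∈ Set.Icc (0:ℝ) 1, γ ≤ kl (tilt P₁ P₂ l) P₁ ∧ E = kl (tilt P₁ P₂ l) P₂}

/-- A sequential hypothesis test whose stopping time is bounded by `N`:
a stopping time `τ` for the coordinate filtration, together with decision events
`A1`, `A2` that are determined by the samples observed up to time `τ`,
are disjoint, and exhaust the sample space. -/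
structure HypTest (𝒳 : Type*) (N : ℕ) where
  τ : (Fin N → 𝒳) → ℕ
  A1 : Set (Fin N → 𝒳)
  A2 : Set (Fin N → 𝒳)
  tau_le : ∀ ω, τ ω ≤ N
  stopping : ∀ ω ω', (∀ i : Fin N, (i : ℕ) < τ ω → ω i = ω' i) → τ ω' = τ ω
  adapted1 : ∀ ω ω', (∀ i : Fin N, (i : ℕ) < τ ω → ω i = ω' i) → (ω ∈ A1 ↔ ω' ∈ A1)
  adapted2 : ∀ ω ω', (∀ i : Fin N, (i : ℕ) < τ ω → ω i = ω' i) → (ω ∈ A2 ↔ ω' ∈ A2)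
  disj : Disjoint A1 A2
  exhaust : A1 ∪ A2 = Set.univ

/-- `(E₁, E₂)` is achievable by `γ`-almost-fixed-length tests. -/
def AFLAchievable (P₁ P₂ : 𝒳 → ℝ) (γ E₁ E₂ : ℝ) : Prop :=
  0 ≤ E₁ ∧ 0 ≤ E₂ ∧
  ∃ c : ℝ, 0 < c ∧ ∃ l : ℕ, 0 < l ∧
    ∀ δ : ℝ, 0 < δ → ∃ n₀ : ℕ, ∀ n : ℕ, n₀ ≤ n →
      ∃ N : ℕ, (N : ℝ) ≤ c * (n : ℝ) ^ l ∧
        ∃ T : HypTest 𝒳 N,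
          prodProb P₁ {ω | n < T.τ ω} ≤ Real.exp (-(γ * n)) ∧
          prodProb P₂ {ω | n < T.τ ω} ≤ Real.exp (-(γ * n)) ∧
          prodProb P₁ T.A2 ≤ Real.exp (-((E₁ - δ) * n)) ∧
          prodProb P₂ T.A1 ≤ Real.exp (-((E₂ - δ) * n))

/-- `(E₁, E₂, E_Ω)` is achievable by fixed-length tests with a rejection option. -/
def RejAchievable (P₁ P₂ : 𝒳 → ℝ) (E₁ E₂ EΩ : ℝ) : Prop :=
  0 ≤ E₁ ∧ 0 ≤ E₂ ∧ 0 ≤ EΩ ∧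
  ∀ δ : ℝ, 0 < δ → ∃ n₀ : ℕ, ∀ n : ℕ, n₀ ≤ n →
    ∃ A1 A2 AΩ : Set (Fin n → 𝒳),
      Disjoint A1 A2 ∧ Disjoint A1 AΩ ∧ Disjoint A2 AΩ ∧ A1 ∪ A2 ∪ AΩ = Set.univ ∧
      prodProb P₁ A2 ≤ Real.exp (-((E₁ - δ) * n)) ∧
      prodProb P₂ A1 ≤ Real.exp (-((E₂ - δ) * n)) ∧
      prodProb P₁ AΩ + prodProb P₂ AΩ ≤ Real.exp (-((EΩ - δ) * n))

/-- Sum of the log-likelihood ratios of the first `n` samples. -/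
noncomputable def S1 (P₁ P₂ : 𝒳 → ℝ) (n : ℕ) {N : ℕ} (ω : Fin N → 𝒳) : ℝ :=
  ∑ i ∈ Finset.univ.filter (fun i : Fin N => (i : ℕ) < n),
    Real.log (P₁ (ω i) / P₂ (ω i))

/-- Sum of the log-likelihood ratios of the samples after time `n`. -/
noncomputable def S2 (P₁ P₂ : 𝒳 → ℝ) (n : ℕ) {N : ℕ} (ω : Fin N → 𝒳) : ℝ :=
  ∑ i ∈ Finset.univ.filter (fun i : Fin N => n ≤ (i : ℕ)),
    Real.log (P₁ (ω i) / P₂ (ω i))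

/-- Event that the two-phase test (phase-one thresholds `α₁ > β₁`, phase-two threshold `α`)
chooses `H₁`. -/
def twoPhaseA1 (P₁ P₂ : 𝒳 → ℝ) (k n : ℕ) (α₁ β₁ α : ℝ) : Set (Fin ((k + 1) * n) → 𝒳) :=
  {ω | α₁ ≤ S1 P₁ P₂ n ω / n ∨
    (β₁ < S1 P₁ P₂ n ω / n ∧ S1 P₁ P₂ n ω / n < α₁ ∧ α ≤ S2 P₁ P₂ n ω / (k * n))}

/-- Event that the two-phase test chooses `H₂`. -/
def twoPhaseA2 (P₁ P₂ : 𝒳 → ℝ) (k n : ℕ) (α₁ β₁ α : ℝ) : Set (Fin ((k + 1) * n) → 𝒳) :=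
  {ω | S1 P₁ P₂ n ω / n ≤ β₁ ∨
    (β₁ < S1 P₁ P₂ n ω / n ∧ S1 P₁ P₂ n ω / n < α₁ ∧ S2 P₁ P₂ n ω / (k * n) < α)}

/-- Stopping time of the two-phase test: `n` if phase one is decisive, `(k+1)n` otherwise. -/
noncomputable def twoPhaseTau (P₁ P₂ : 𝒳 → ℝ) (k n : ℕ) (α₁ β₁ : ℝ)
    (ω : Fin ((k + 1) * n) → 𝒳) : ℕ :=
  if β₁ < S1 P₁ P₂ n ω / n ∧ S1 P₁ P₂ n ω / n < α₁ then (k + 1) * n else n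


section helpers

variable (P₁ P₂ : 𝒳 → ℝ)

noncomputable def Zc (l : ℝ) : ℝ := ∑ a, P₁ a ^ (1 - l) * P₂ a ^ l

lemma Zc_pos (h1 : ∀ x, 0 < P₁ x) (h2 : ∀ x, 0 < P₂ x) (l : ℝ) : 0 < Zc P₁ P₂ l :=
  Finset.sum_pos (fun x _ => mul_pos (Real.rpow_pos_of_pos (h1 x) _)
    (Real.rpow_pos_of_pos (h2 x) _)) univ_nonempty

lemma tilt_pos (h1 : ∀ x, 0 < P₁ x) (h2 : ∀ x, 0 < P₂ x) (l : ℝ) (x : 𝒳) :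
    0 < tilt P₁ P₂ l x :=
  div_pos (mul_pos (Real.rpow_pos_of_pos (h1 x) _) (Real.rpow_pos_of_pos (h2 x) _))
    (Zc_pos P₁ P₂ h1 h2 l)

lemma tilt_sum (h1 : ∀ x, 0 < P₁ x) (h2 : ∀ x, 0 < P₂ x) (l : ℝ) :
    ∑ x, tilt P₁ P₂ l x = 1 := by
  have := (Zc_pos P₁ P₂ h1 h2 l).ne'
  unfold tilt
  rw [← Finset.sum_div]
  exact div_self this

lemma beta_eq (h1 : ∀ x, 0 < P₁ x) (h2 : ∀ x, 0 < P₂ x) (l : ℝ) :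
    kl (tilt P₁ P₂ l) P₂ - kl (tilt P₁ P₂ l) P₁
      = ∑ x, tilt P₁ P₂ l x * Real.log (P₁ x / P₂ x) := by
  unfold kl
  rw [← Finset.sum_sub_distrib]
  refine Finset.sum_congr rfl fun x _ => ?_
  rw [← mul_sub]
  congr 1
  rw [Real.log_div (tilt_pos P₁ P₂ h1 h2 l x).ne' (h2 x).ne',
    Real.log_div (tilt_pos P₁ P₂ h1 h2 l x).ne' (h1 x).ne',
    Real.log_div (h1 x).ne' (h2 x).ne']
  ring

lemma log_tilt (h1 : ∀ x, 0 < P₁ x) (h2 : ∀ x, 0 < P₂ x) (l : ℝ) (x : 𝒳) :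
    Real.log (tilt P₁ P₂ l x / P₁ x)
      = -l * Real.log (P₁ x / P₂ x) - Real.log (Zc P₁ P₂ l) := by
  have hz := Zc_pos P₁ P₂ h1 h2 l
  have h1' := h1 x; have h2' := h2 x
  have hnum : (0:ℝ) < P₁ x ^ (1 - l) * P₂ x ^ l :=
    mul_pos (Real.rpow_pos_of_pos h1' _) (Real.rpow_pos_of_pos h2' _)
  show Real.log (P₁ x ^ (1 - l) * P₂ x ^ l / Zc P₁ P₂ l / P₁ x) = _
  rw [Real.log_div (div_pos hnum hz).ne' h1'.ne', Real.log_div hnum.ne' hz.ne',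
    Real.log_mul (Real.rpow_pos_of_pos h1' _).ne' (Real.rpow_pos_of_pos h2' _).ne',
    Real.log_rpow h1', Real.log_rpow h2', Real.log_div h1'.ne' h2'.ne']
  ring

lemma kl_tilt_eq (h1 : ∀ x, 0 < P₁ x) (h2 : ∀ x, 0 < P₂ x) (l : ℝ) :
    kl (tilt P₁ P₂ l) P₁
      = -l * (kl (tilt P₁ P₂ l) P₂ - kl (tilt P₁ P₂ l) P₁) - Real.log (Zc P₁ P₂ l) := by
  rw [beta_eq P₁ P₂ h1 h2 l]
  unfold kl
  rw [Finset.mul_sum]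
  have : ∀ x ∈ (univ : Finset 𝒳), tilt P₁ P₂ l x * Real.log (tilt P₁ P₂ l x / P₁ x)
      = -l * (tilt P₁ P₂ l x * Real.log (P₁ x / P₂ x))
        - tilt P₁ P₂ l x * Real.log (Zc P₁ P₂ l) := by
    intro x _
    rw [log_tilt P₁ P₂ h1 h2 l x]
    ring
  rw [Finset.sum_congr rfl this, Finset.sum_sub_distrib, ← Finset.sum_mul,
    tilt_sum P₁ P₂ h1 h2 l, one_mul]

/-- The key identity in multiplicative form. -/
lemma exp_beta_Z (h1 : ∀ x, 0 < P₁ x) (h2 : ∀ x, 0 < P₂ x) (l : ℝ) :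
    Real.exp (l * (kl (tilt P₁ P₂ l) P₂ - kl (tilt P₁ P₂ l) P₁)) * Zc P₁ P₂ l
      = Real.exp (-(kl (tilt P₁ P₂ l) P₁)) := by
  have hz := Zc_pos P₁ P₂ h1 h2 l
  have hD := kl_tilt_eq P₁ P₂ h1 h2 l
  rw [← Real.exp_log hz, ← Real.exp_add]
  congr 1
  linear_combination hD

end helpers

lemma card_filter_lt (n N : ℕ) (h : n ≤ N) :
    ((univ : Finset (Fin N)).filter (fun i : Fin N => (i : ℕ) < n)).card = n := by
  have : (univ : Finset (Fin N)).filter (fun i : Fin N => (i : ℕ) < n)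
      = Finset.map (Fin.castLEEmb h) univ := by
    ext i
    simp only [Finset.mem_filter, Finset.mem_univ, true_and, Finset.mem_map,
      Fin.castLEEmb, Function.Embedding.coeFn_mk]
    constructor
    · intro hi; exact ⟨⟨(i : ℕ), hi⟩, by simp [Fin.castLE, Fin.ext_iff]⟩
    · rintro ⟨j, rfl⟩; simpa using j.isLt
  rw [this, Finset.card_map, Finset.card_univ, Fintype.card_fin]

lemma card_filter_ge (n N : ℕ) (h : n ≤ N) :
    ((univ : Finset (Fin N)).filter (fun i : Fin N => ¬ ((i : ℕ) < n))).card = N - n := by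
  have := Finset.card_filter_add_card_filter_not
    (s := (univ : Finset (Fin N))) (fun i : Fin N => (i : ℕ) < n)
  rw [card_filter_lt n N h, Finset.card_univ, Fintype.card_fin] at this
  omega

section chern

variable (P₁ P₂ : 𝒳 → ℝ)

lemma exch (h1 : ∀ x, 0 < P₁ x) (h2 : ∀ x, 0 < P₂ x) (c : ℝ) (x : 𝒳) :
    P₁ x * (P₂ x / P₁ x) ^ c = P₁ x ^ (1 - c) * P₂ x ^ c := by
  rw [Real.div_rpow (h2 x).le (h1 x).le, Real.rpow_sub (h1 x), Real.rpow_one]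
  have h1c := Real.rpow_pos_of_pos (h1 x) c
  field_simp

lemma chernoff (h1 : ∀ x, 0 < P₁ x) (h2 : ∀ x, 0 < P₂ x) (n k : ℕ) (μ ν t₁ t₂ : ℝ)
    (S : Set (Fin ((k + 1) * n) → 𝒳))
    (hS : ∀ ω ∈ S, 0 ≤ μ * (t₁ - S1 P₁ P₂ n ω) ∧ 0 ≤ ν * (t₂ - S2 P₁ P₂ n ω)) :
    prodProb P₁ S ≤ Real.exp (μ * t₁) * Real.exp (ν * t₂) *
      Zc P₁ P₂ μ ^ n * Zc P₁ P₂ ν ^ (k * n) := by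
  have hnN : n ≤ (k + 1) * n := Nat.le_mul_of_pos_left n (Nat.succ_pos k)
  let w : Fin ((k + 1) * n) → ℝ := fun i => if (i : ℕ) < n then μ else ν
  let f : Fin ((k + 1) * n) → 𝒳 → ℝ := fun i x => P₁ x * (P₂ x / P₁ x) ^ (w i)
  have key : ∀ ω : Fin ((k + 1) * n) → 𝒳,
      S.indicator (fun ω' => ∏ i, P₁ (ω' i)) ω
        ≤ Real.exp (μ * t₁) * Real.exp (ν * t₂) * ∏ i, f i (ω i) := by
    intro ω
    have hsum : μ * S1 P₁ P₂ n ω + ν * S2 P₁ P₂ n ω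
        = ∑ i, w i * Real.log (P₁ (ω i) / P₂ (ω i)) := by
      rw [← Finset.sum_filter_add_sum_filter_not (univ : Finset (Fin ((k + 1) * n)))
        (fun i => (i : ℕ) < n)]
      congr 1
      · rw [S1, Finset.mul_sum]
        refine Finset.sum_congr rfl fun i hi => ?_
        simp only [Finset.mem_filter] at hi
        simp only [w, if_pos hi.2]
      · rw [S2, Finset.mul_sum]
        refine Finset.sum_congr (by ext i; simp [not_lt]) fun i hi => ?_
        simp only [Finset.mem_filter, not_lt] at hi
        simp only [w, if_neg (not_lt.2 hi.2)]
    have hfact : ∏ i, f i (ω i)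
        = Real.exp (-(μ * S1 P₁ P₂ n ω + ν * S2 P₁ P₂ n ω)) * ∏ i, P₁ (ω i) := by
      rw [hsum, ← Finset.sum_neg_distrib, Real.exp_sum, ← Finset.prod_mul_distrib]
      refine Finset.prod_congr rfl fun i _ => ?_
      show P₁ (ω i) * (P₂ (ω i) / P₁ (ω i)) ^ (w i) = _
      rw [Real.rpow_def_of_pos (div_pos (h2 _) (h1 _)),
        show Real.log (P₂ (ω i) / P₁ (ω i)) = -Real.log (P₁ (ω i) / P₂ (ω i)) by
          rw [Real.log_div (h2 _).ne' (h1 _).ne', Real.log_div (h1 _).ne' (h2 _).ne']; ring]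
      ring_nf
    rw [hfact]
    by_cases hωS : ω ∈ S
    · rw [Set.indicator_of_mem hωS]
      obtain ⟨ha, hb⟩ := hS ω hωS
      have h1exp : 1 ≤ Real.exp (μ * t₁) * Real.exp (ν * t₂)
          * Real.exp (-(μ * S1 P₁ P₂ n ω + ν * S2 P₁ P₂ n ω)) := by
        rw [← Real.exp_add, ← Real.exp_add]
        rw [show μ * t₁ + ν * t₂ + -(μ * S1 P₁ P₂ n ω + ν * S2 P₁ P₂ n ω)
            = μ * (t₁ - S1 P₁ P₂ n ω) + ν * (t₂ - S2 P₁ P₂ n ω) by ring]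
        exact Real.one_le_exp (by linarith)
      calc ∏ i, P₁ (ω i) = 1 * ∏ i, P₁ (ω i) := (one_mul _).symm
        _ ≤ (Real.exp (μ * t₁) * Real.exp (ν * t₂)
              * Real.exp (-(μ * S1 P₁ P₂ n ω + ν * S2 P₁ P₂ n ω))) * ∏ i, P₁ (ω i) :=
            mul_le_mul_of_nonneg_right h1exp (Finset.prod_nonneg fun i _ => (h1 _).le)
        _ = _ := by ring
    · rw [Set.indicator_of_notMem hωS]
      exact mul_nonneg (by positivity)
        (mul_nonneg (Real.exp_nonneg _) (Finset.prod_nonneg fun i _ => (h1 _).le))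
  calc prodProb P₁ S ≤ ∑ ω : Fin ((k + 1) * n) → 𝒳,
        Real.exp (μ * t₁) * Real.exp (ν * t₂) * ∏ i, f i (ω i) :=
      Finset.sum_le_sum fun ω _ => key ω
    _ = Real.exp (μ * t₁) * Real.exp (ν * t₂) *
        ∑ ω : Fin ((k + 1) * n) → 𝒳, ∏ i, f i (ω i) := by
      rw [← Finset.mul_sum]
    _ = Real.exp (μ * t₁) * Real.exp (ν * t₂) * ∏ i : Fin ((k + 1) * n), ∑ x, f i x := by
      rw [← Fintype.piFinset_univ, ← Finset.prod_univ_sum (fun _ => univ) f]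
    _ = _ := by
      have hval : ∀ i : Fin ((k + 1) * n),
          ∑ x, f i x = if (i : ℕ) < n then Zc P₁ P₂ μ else Zc P₁ P₂ ν := by
        intro i
        by_cases hi : (i : ℕ) < n <;>
          simp only [f, w, hi, if_true, if_false, Zc] <;>
          exact Finset.sum_congr rfl fun x _ => exch P₁ P₂ h1 h2 _ x
      rw [Finset.prod_congr rfl fun i _ => hval i]
      rw [← Finset.prod_filter_mul_prod_filter_not (univ : Finset (Fin ((k + 1) * n)))
        (fun i => (i : ℕ) < n)]
      rw [Finset.prod_congr rfl (fun i hi => if_pos (Finset.mem_filter.1 hi).2),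
        Finset.prod_congr rfl (fun i hi => if_neg (Finset.mem_filter.1 hi).2),
        Finset.prod_const, Finset.prod_const, card_filter_lt n _ hnN, card_filter_ge n _ hnN,
        show (k + 1) * n - n = k * n by rw [add_mul, one_mul, Nat.add_sub_cancel]]
      ring

end chern

section prodprob

variable (P : 𝒳 → ℝ) {N : ℕ}

lemma prodProb_mono (hP : ∀ x, 0 ≤ P x) {S T : Set (Fin N → 𝒳)} (h : S ⊆ T) :
    prodProb P S ≤ prodProb P T :=
  Finset.sum_le_sum fun ω _ => Set.indicator_le_indicator_of_subset h
    (fun ω' => Finset.prod_nonneg fun i _ => hP _) ω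

lemma prodProb_union_le (hP : ∀ x, 0 ≤ P x) (S T : Set (Fin N → 𝒳)) :
    prodProb P (S ∪ T) ≤ prodProb P S + prodProb P T := by
  rw [prodProb, prodProb, prodProb, ← Finset.sum_add_distrib]
  refine Finset.sum_le_sum fun ω _ => ?_
  have hf : (0:ℝ) ≤ ∏ i, P (ω i) := Finset.prod_nonneg fun i _ => hP _
  by_cases hS : ω ∈ S
  · by_cases hT : ω ∈ T
    · rw [Set.indicator_of_mem (Set.mem_union_left _ hS), Set.indicator_of_mem hS,
        Set.indicator_of_mem hT]; linarith
    · rw [Set.indicator_of_mem (Set.mem_union_left _ hS), Set.indicator_of_mem hS,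
        Set.indicator_of_notMem hT]; linarith
  · by_cases hT : ω ∈ T
    · rw [Set.indicator_of_mem (Set.mem_union_right _ hT), Set.indicator_of_notMem hS,
        Set.indicator_of_mem hT]; linarith
    · rw [Set.indicator_of_notMem (fun h' => h'.elim hS hT), Set.indicator_of_notMem hS,
        Set.indicator_of_notMem hT]; linarith

lemma le_prodProb (hP : ∀ x, 0 ≤ P x) {S : Set (Fin N → 𝒳)} {ω₀ : Fin N → 𝒳} (hω₀ : ω₀ ∈ S) :
    ∏ i, P (ω₀ i) ≤ prodProb P S := by
  rw [show ∏ i, P (ω₀ i) = S.indicator (fun ω' => ∏ i, P (ω' i)) ω₀ by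
    rw [Set.indicator_of_mem hω₀]]
  exact Finset.single_le_sum (f := fun ω => S.indicator (fun ω' => ∏ i, P (ω' i)) ω)
    (fun ω _ => Set.indicator_apply_nonneg
      (fun _ => Finset.prod_nonneg fun i _ => hP _)) (Finset.mem_univ ω₀)

end prodprob

lemma Zc_zero (P₁ P₂ : 𝒳 → ℝ) (h1sum : ∑ x, P₁ x = 1) : Zc P₁ P₂ 0 = 1 := by
  have h : ∀ x ∈ (univ : Finset 𝒳), P₁ x ^ ((1:ℝ) - 0) * P₂ x ^ (0:ℝ) = P₁ x := fun x _ => by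
    rw [sub_zero, Real.rpow_one, Real.rpow_zero, mul_one]
  rw [Zc, Finset.sum_congr rfl h, h1sum]


/-- Type-I error exponent of the two-phase test:
`limsup (1/n) log P₁(A₂^τ) ≤ −min{D(P^(l₁)‖P₁), γ + k·D(P^(λ)‖P₁)}`. -/
theorem twoPhase_typeI_exponent (P₁ P₂ : 𝒳 → ℝ)
    (h1pos : ∀ x, 0 < P₁ x) (h2pos : ∀ x, 0 < P₂ x)
    (h1sum : ∑ x, P₁ x = 1) (h2sum : ∑ x, P₂ x = 1)
    (hne : P₁ ≠ P₂)
    (ls : ℝ) (hls : ls ∈ Set.Icc (0:ℝ) 1)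
    (hchern : kl (tilt P₁ P₂ ls) P₁ = kl (tilt P₁ P₂ ls) P₂)
    (γ : ℝ) (hγ0 : 0 < γ) (hγD : γ ≤ kl (tilt P₁ P₂ ls) P₁)
    (k : ℕ) (hk : 0 < k)
    (l₁ l₂ lam : ℝ)
    (hl₁ : l₁ ∈ Set.Icc (0:ℝ) 1) (hl₂ : l₂ ∈ Set.Icc (0:ℝ) 1)
    (hlam : lam ∈ Set.Icc (0:ℝ) 1) (hord : l₂ ≤ l₁)
    (hmin : min (kl (tilt P₁ P₂ l₁) P₂) (kl (tilt P₁ P₂ l₂) P₁) = γ) :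
    Filter.limsup (fun n : ℕ =>
        Real.log (prodProb P₁ (twoPhaseA2 P₁ P₂ k n
          (kl (tilt P₁ P₂ l₂) P₂ - kl (tilt P₁ P₂ l₂) P₁)
          (kl (tilt P₁ P₂ l₁) P₂ - kl (tilt P₁ P₂ l₁) P₁)
          (kl (tilt P₁ P₂ lam) P₂ - kl (tilt P₁ P₂ lam) P₁))) / (n : ℝ))
      Filter.atTop
      ≤ -(min (kl (tilt P₁ P₂ l₁) P₁) (γ + k * kl (tilt P₁ P₂ lam) P₁)) := by
  obtain ⟨hl₁0, hl₁1⟩ := hl₁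
  obtain ⟨hl₂0, hl₂1⟩ := hl₂
  obtain ⟨hlam0, hlam1⟩ := hlam
  set A1 := kl (tilt P₁ P₂ l₂) P₂ - kl (tilt P₁ P₂ l₂) P₁ with hA1def
  set B1 := kl (tilt P₁ P₂ l₁) P₂ - kl (tilt P₁ P₂ l₁) P₁ with hB1def
  set Al := kl (tilt P₁ P₂ lam) P₂ - kl (tilt P₁ P₂ lam) P₁ with hAldef
  set m := min (kl (tilt P₁ P₂ l₁) P₁) (γ + k * kl (tilt P₁ P₂ lam) P₁) with hmdef
  have hE1 : Real.exp (l₁ * B1) * Zc P₁ P₂ l₁ = Real.exp (-(kl (tilt P₁ P₂ l₁) P₁)) :=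
    exp_beta_Z P₁ P₂ h1pos h2pos l₁
  have hE2 : Real.exp (l₂ * A1) * Zc P₁ P₂ l₂ = Real.exp (-(kl (tilt P₁ P₂ l₂) P₁)) :=
    exp_beta_Z P₁ P₂ h1pos h2pos l₂
  have hEl : Real.exp (lam * Al) * Zc P₁ P₂ lam = Real.exp (-(kl (tilt P₁ P₂ lam) P₁)) :=
    exp_beta_Z P₁ P₂ h1pos h2pos lam
  have hγ2 : γ ≤ kl (tilt P₁ P₂ l₂) P₁ := by
    rw [← hmin]; exact min_le_right _ _
  have hm1 : m ≤ kl (tilt P₁ P₂ l₁) P₁ := min_le_left _ _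
  have hm2 : m ≤ γ + k * kl (tilt P₁ P₂ lam) P₁ := min_le_right _ _
  -- minimizing point of the log-likelihood ratio
  obtain ⟨xm, -, hxm⟩ := Finset.exists_min_image (univ : Finset 𝒳)
    (fun x => Real.log (P₁ x / P₂ x)) univ_nonempty
  have hLB1 : Real.log (P₁ xm / P₂ xm) ≤ B1 := by
    have h1' : Real.log (P₁ xm / P₂ xm)
        = ∑ x, tilt P₁ P₂ l₁ x * Real.log (P₁ xm / P₂ xm) := by
      rw [← Finset.sum_mul, tilt_sum P₁ P₂ h1pos h2pos, one_mul]
    rw [h1', hB1def, beta_eq P₁ P₂ h1pos h2pos l₁]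
    exact Finset.sum_le_sum fun x _ => mul_le_mul_of_nonneg_left
      (hxm x (Finset.mem_univ x)) (tilt_pos P₁ P₂ h1pos h2pos l₁ x).le
  -- membership of the constant path
  have hmemA2 : ∀ n : ℕ, 1 ≤ n →
      (fun _ => xm) ∈ twoPhaseA2 P₁ P₂ k n A1 B1 Al := by
    intro n hn
    have hn0 : (0:ℝ) < n := by exact_mod_cast hn
    have hnN : n ≤ (k + 1) * n := Nat.le_mul_of_pos_left n (Nat.succ_pos k)
    left
    have hS1 : S1 P₁ P₂ n (fun _ : Fin ((k + 1) * n) => xm) = n * Real.log (P₁ xm / P₂ xm) := by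
      rw [S1, Finset.sum_const, card_filter_lt n _ hnN, nsmul_eq_mul]
    show S1 P₁ P₂ n (fun _ : Fin ((k + 1) * n) => xm) / n ≤ B1
    rw [hS1, mul_div_cancel_left₀ _ hn0.ne']
    exact hLB1
  -- key exponential upper bound
  have hkey : ∀ n : ℕ, 1 ≤ n →
      prodProb P₁ (twoPhaseA2 P₁ P₂ k n A1 B1 Al) ≤ 2 * Real.exp (-(m * n)) := by
    intro n hn
    have hn0 : (0:ℝ) < n := by exact_mod_cast hn
    have hkn0 : (0:ℝ) < (k : ℝ) * n := mul_pos (by exact_mod_cast hk) hn0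
    have hEa : prodProb P₁ {ω : Fin ((k + 1) * n) → 𝒳 | S1 P₁ P₂ n ω / n ≤ B1}
        ≤ Real.exp (-(m * n)) := by
      have hch := chernoff P₁ P₂ h1pos h2pos n k l₁ 0 (B1 * n) 0
        {ω : Fin ((k + 1) * n) → 𝒳 | S1 P₁ P₂ n ω / n ≤ B1}
        (fun ω hω => ⟨mul_nonneg hl₁0 (sub_nonneg.2 ((div_le_iff₀ hn0).1 hω)),
          by rw [zero_mul]⟩)
      refine hch.trans ?_
      have heq : Real.exp (l₁ * (B1 * n)) * Real.exp (0 * 0) *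
          Zc P₁ P₂ l₁ ^ n * Zc P₁ P₂ 0 ^ (k * n)
          = (Real.exp (l₁ * B1) * Zc P₁ P₂ l₁) ^ n := by
        rw [Zc_zero P₁ P₂ h1sum, one_pow, zero_mul, Real.exp_zero, mul_one, mul_one,
          mul_pow, show l₁ * (B1 * (n:ℝ)) = (n:ℝ) * (l₁ * B1) by ring, Real.exp_nat_mul]
      rw [heq, hE1, ← Real.exp_nat_mul]
      refine Real.exp_le_exp.2 ?_
      have h := mul_le_mul_of_nonneg_right hm1 hn0.le
      linarith
    have hEb : prodProb P₁ {ω : Fin ((k + 1) * n) → 𝒳 |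
          S1 P₁ P₂ n ω / n < A1 ∧ S2 P₁ P₂ n ω / ((k : ℝ) * n) < Al}
        ≤ Real.exp (-(m * n)) := by
      have hch := chernoff P₁ P₂ h1pos h2pos n k l₂ lam (A1 * n) (Al * ((k : ℝ) * n))
        {ω : Fin ((k + 1) * n) → 𝒳 |
          S1 P₁ P₂ n ω / n < A1 ∧ S2 P₁ P₂ n ω / ((k : ℝ) * n) < Al}
        (fun ω hω => ⟨mul_nonneg hl₂0 (sub_nonneg.2 ((div_le_iff₀ hn0).1 hω.1.le)),
          mul_nonneg hlam0 (sub_nonneg.2 ((div_le_iff₀ hkn0).1 hω.2.le))⟩)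
      refine hch.trans ?_
      have heq : Real.exp (l₂ * (A1 * n)) * Real.exp (lam * (Al * ((k : ℝ) * n))) *
          Zc P₁ P₂ l₂ ^ n * Zc P₁ P₂ lam ^ (k * n)
          = (Real.exp (l₂ * A1) * Zc P₁ P₂ l₂) ^ n *
            (Real.exp (lam * Al) * Zc P₁ P₂ lam) ^ (k * n) := by
        rw [mul_pow, mul_pow,
          show l₂ * (A1 * (n:ℝ)) = (n:ℝ) * (l₂ * A1) by ring,
          show lam * (Al * ((k:ℝ) * n)) = ((k * n : ℕ) : ℝ) * (lam * Al) by push_cast; ring,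
          Real.exp_nat_mul, Real.exp_nat_mul]
        ring
      rw [heq, hE2, hEl, ← Real.exp_nat_mul, ← Real.exp_nat_mul, ← Real.exp_add]
      refine Real.exp_le_exp.2 ?_
      push_cast
      have h1 : m ≤ kl (tilt P₁ P₂ l₂) P₁ + k * kl (tilt P₁ P₂ lam) P₁ := by linarith
      have h := mul_le_mul_of_nonneg_right h1 hn0.le
      linarith
    have hsub : twoPhaseA2 P₁ P₂ k n A1 B1 Al ⊆
        {ω : Fin ((k + 1) * n) → 𝒳 | S1 P₁ P₂ n ω / n ≤ B1} ∪
        {ω : Fin ((k + 1) * n) → 𝒳 |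
          S1 P₁ P₂ n ω / n < A1 ∧ S2 P₁ P₂ n ω / ((k : ℝ) * n) < Al} := by
      rintro ω (h | ⟨h1, h2, h3⟩)
      · exact Or.inl h
      · exact Or.inr ⟨h2, h3⟩
    calc prodProb P₁ (twoPhaseA2 P₁ P₂ k n A1 B1 Al)
        ≤ prodProb P₁ ({ω : Fin ((k + 1) * n) → 𝒳 | S1 P₁ P₂ n ω / n ≤ B1} ∪
          {ω : Fin ((k + 1) * n) → 𝒳 |
            S1 P₁ P₂ n ω / n < A1 ∧ S2 P₁ P₂ n ω / ((k : ℝ) * n) < Al}) :=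
        prodProb_mono P₁ (fun x => (h1pos x).le) hsub
      _ ≤ _ + _ := prodProb_union_le P₁ (fun x => (h1pos x).le) _ _
      _ ≤ Real.exp (-(m * n)) + Real.exp (-(m * n)) := add_le_add hEa hEb
      _ = 2 * Real.exp (-(m * n)) := by ring
  -- positivity and lower bound
  have hposlow : ∀ n : ℕ, 1 ≤ n →
      0 < prodProb P₁ (twoPhaseA2 P₁ P₂ k n A1 B1 Al) ∧
      ((k : ℝ) + 1) * Real.log (P₁ xm)
        ≤ Real.log (prodProb P₁ (twoPhaseA2 P₁ P₂ k n A1 B1 Al)) / n := by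
    intro n hn
    have hn0 : (0:ℝ) < n := by exact_mod_cast hn
    have hle := le_prodProb P₁ (fun x => (h1pos x).le) (hmemA2 n hn)
    rw [Finset.prod_const, Finset.card_univ, Fintype.card_fin] at hle
    have hppos : (0:ℝ) < P₁ xm ^ ((k + 1) * n) := pow_pos (h1pos xm) _
    have hpb : 0 < prodProb P₁ (twoPhaseA2 P₁ P₂ k n A1 B1 Al) := lt_of_lt_of_le hppos hle
    refine ⟨hpb, ?_⟩
    have hlog : (((k + 1) * n : ℕ) : ℝ) * Real.log (P₁ xm)
        ≤ Real.log (prodProb P₁ (twoPhaseA2 P₁ P₂ k n A1 B1 Al)) := by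
      rw [← Real.log_pow]
      exact Real.log_le_log hppos hle
    rw [le_div_iff₀ hn0]
    push_cast at hlog ⊢
    linarith [hlog]
  -- assemble the limsup bound
  have hupper : ∀ n : ℕ, 1 ≤ n →
      Real.log (prodProb P₁ (twoPhaseA2 P₁ P₂ k n A1 B1 Al)) / n ≤ Real.log 2 / n - m := by
    intro n hn
    have hn0 : (0:ℝ) < n := by exact_mod_cast hn
    have hpb := (hposlow n hn).1
    have hlog : Real.log (prodProb P₁ (twoPhaseA2 P₁ P₂ k n A1 B1 Al))
        ≤ Real.log 2 + -(m * n) := by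
      have := Real.log_le_log hpb (hkey n hn)
      rwa [Real.log_mul two_ne_zero (Real.exp_ne_zero _), Real.log_exp] at this
    calc Real.log (prodProb P₁ (twoPhaseA2 P₁ P₂ k n A1 B1 Al)) / n
        ≤ (Real.log 2 + -(m * n)) / n := (div_le_div_iff_of_pos_right hn0).2 hlog
      _ = Real.log 2 / n - m := by field_simp; ring
  have hg : Filter.Tendsto (fun n : ℕ => Real.log 2 / n - m) Filter.atTop (nhds (0 - m)) :=
    (tendsto_const_div_atTop_nhds_zero_nat (Real.log 2)).sub_const m
  rw [zero_sub] at hg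
  calc Filter.limsup (fun n : ℕ =>
        Real.log (prodProb P₁ (twoPhaseA2 P₁ P₂ k n A1 B1 Al)) / (n : ℝ)) Filter.atTop
      ≤ Filter.limsup (fun n : ℕ => Real.log 2 / n - m) Filter.atTop := by
        refine Filter.limsup_le_limsup ?_ ?_ hg.isBoundedUnder_le
        · exact Filter.eventually_atTop.2 ⟨1, fun n hn => hupper n hn⟩
        · exact Filter.isCoboundedUnder_le_of_eventually_le Filter.atTop
            (x := ((k : ℝ) + 1) * Real.log (P₁ xm))
            (Filter.eventually_atTop.2 ⟨1, fun n hn => (hposlow n hn).2⟩)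
    _ = -m := hg.limsup_eq
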